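/- Let G be a finite non-abelian Cpo-group and let p be the largest prime divisor of |G|. Then |Cent(G)| = p + 2. -/

import Mathlib

/-- A group `G` is a Cpo-group if the centralizer of every non-trivial element
has prime order. -/
def IsCpoGroup (G : Type*) [Group G] : Prop :=
  ∀ x : G, x ≠ 1 → (Nat.card (Subgroup.centralizer ({x} : Set G))).Prime

/-- The number of distinct element centralizers of a group. -/
noncomputable def numCent (G : Type*) [Group G] : ℕ :=
  Set.ncard {H : Subgroup G | ∃ x : G, H = Subgroup.centralizer ({x} : Set G)}

set_option maxHeartbeats 1000000
set_option linter.unusedSectionVars false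

section CpoProofAux
namespace CpoAux

open Subgroup

variable {G : Type*} [Group G]

lemma zpowers_le_centralizer (x : G) : zpowers x ≤ Subgroup.centralizer {x} := by
  intro g hg
  obtain ⟨k, rfl⟩ := mem_zpowers_iff.mp hg
  exact mem_centralizer_singleton_iff.mpr ((Commute.refl x).zpow_left k).eq

variable [Finite G]

lemma card_cc (hG : IsCpoGroup G) {x : G} (hx : x ≠ 1) :
    Nat.card (Subgroup.centralizer ({x} : Set G)) = orderOf x := by
  have hq := hG x hx
  have hxo : orderOf x ∣ Nat.card (Subgroup.centralizer ({x} : Set G)) := by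
    rw [← Nat.card_zpowers]
    exact Subgroup.card_dvd_of_le (zpowers_le_centralizer x)
  have h1 : orderOf x ≠ 1 := by simpa [orderOf_eq_one_iff] using hx
  exact ((hq.eq_one_or_self_of_dvd _ hxo).resolve_left h1).symm

lemma orderOf_prime (hG : IsCpoGroup G) {x : G} (hx : x ≠ 1) : (orderOf x).Prime :=
  card_cc hG hx ▸ hG x hx

lemma cc_eq (hG : IsCpoGroup G) {x : G} (hx : x ≠ 1) :
    Subgroup.centralizer ({x} : Set G) = zpowers x :=
  (Subgroup.eq_of_le_of_card_ge (zpowers_le_centralizer x)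
    (by rw [Nat.card_zpowers, card_cc hG hx])).symm

lemma isCpo_subgroup (hG : IsCpoGroup G) (K : Subgroup G) : IsCpoGroup K := by
  intro y hy
  have hy' : (y : G) ≠ 1 := by simpa using hy
  have h1 : Subgroup.centralizer ({y} : Set K) = zpowers y := by
    refine le_antisymm (fun z hz => ?_) (zpowers_le_centralizer y)
    rw [mem_centralizer_singleton_iff] at hz
    have hz' : (z : G) ∈ Subgroup.centralizer ({(y : G)} : Set G) :=
      mem_centralizer_singleton_iff.mpr (by exact_mod_cast congrArg (Subtype.val) hz)
    rw [cc_eq hG hy'] at hz'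
    obtain ⟨m, hm⟩ := mem_zpowers_iff.mp hz'
    exact mem_zpowers_iff.mpr ⟨m, by ext; push_cast; exact hm⟩
  rw [h1, Nat.card_zpowers, ← Subgroup.orderOf_coe]
  exact orderOf_prime hG hy'

lemma squarefree_card (hG : IsCpoGroup G) : Squarefree (Nat.card G) := by
  rw [Nat.squarefree_iff_prime_squarefree]
  intro q hq hsq
  haveI : Fact q.Prime := ⟨hq⟩
  obtain ⟨P⟩ : Nonempty (Sylow q G) := inferInstance
  have hcP : Nat.card P.1 = q ^ (Nat.card G).factorization q := P.card_eq_multiplicity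
  have h2 : 2 ≤ (Nat.card G).factorization q := by
    rw [← Nat.Prime.pow_dvd_iff_le_factorization hq Nat.card_pos.ne', pow_two]
    exact hsq
  have hlt : 1 < Nat.card P.1 := by
    rw [hcP]
    calc 1 < q ^ 2 := Nat.one_lt_pow (by norm_num) hq.one_lt
    _ ≤ _ := Nat.pow_le_pow_right hq.pos h2
  haveI : Nontrivial P.1 := Finite.one_lt_card_iff_nontrivial.mp hlt
  haveI : Finite P.1 := inferInstance
  have hcenter : Nontrivial (Subgroup.center P.1) := P.2.center_nontrivial
  obtain ⟨z, hzc, hz1⟩ := (Subgroup.nontrivial_iff_exists_ne_one _).mp hcenter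
  have hz1' : ((z : P.1) : G) ≠ 1 := by simpa using hz1
  have hle : P.1 ≤ Subgroup.centralizer ({((z : P.1) : G)} : Set G) := by
    intro g hg
    have h := Subgroup.mem_center_iff.mp hzc ⟨g, hg⟩
    have h2 : ((⟨g, hg⟩ * (z : P.1) : P.1) : G) = (((z : P.1) * ⟨g, hg⟩ : P.1) : G) :=
      congrArg _ h
    push_cast at h2
    exact mem_centralizer_singleton_iff.mpr h2
  have hdvd : Nat.card P.1 ∣ Nat.card (Subgroup.centralizer ({((z : P.1) : G)} : Set G)) :=
    Subgroup.card_dvd_of_le hle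
  rw [card_cc hG hz1'] at hdvd
  have hp' := orderOf_prime hG hz1'
  rcases (hp'.eq_one_or_self_of_dvd _ hdvd) with h | h
  · rw [hcP] at h
    exact absurd (pow_eq_one_iff_left (by omega)|>.mp h) hq.ne_one
  · -- Nat.card P = orderOf z prime, but q^2 divides Nat.card P
    have hq2 : q * q ∣ orderOf ((z : P.1) : G) := by
      rw [← h, hcP, ← pow_two]
      exact pow_dvd_pow q h2
    rcases (hp'.eq_one_or_self_of_dvd q (dvd_of_mul_right_dvd hq2)) with h1 | h1
    · exact hq.ne_one h1
    · have := Nat.le_of_dvd hp'.pos hq2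
      rw [← h1] at this
      nlinarith [hq.two_le]



lemma mulAut_commute {H : Type*} [Group H] [IsCyclic H] (φ ψ : MulAut H) :
    φ * ψ = ψ * φ := by
  obtain ⟨h, hh⟩ := IsCyclic.exists_generator (α := H)
  ext a
  obtain ⟨k, rfl⟩ := hh a
  obtain ⟨i, hi⟩ := hh (φ h)
  obtain ⟨j, hj⟩ := hh (ψ h)
  have key : φ (ψ h) = ψ (φ h) := by
    rw [← hi, ← hj, map_zpow, map_zpow, ← hi, ← hj, ← zpow_mul, ← zpow_mul, mul_comm]
  show φ (ψ (h ^ k)) = ψ (φ (h ^ k))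
  rw [map_zpow, map_zpow, map_zpow, map_zpow, key]

lemma sylow_count_eq_one {a p r : ℕ} (hp : 1 < p) (h1 : a ≡ 1 [MOD p]) (h2 : a ∣ r)
    (h3 : r < p) (hr : 0 < r) : a = 1 := by
  have ha : a ≤ r := Nat.le_of_dvd hr h2
  have : a % p = 1 % p := h1
  rw [Nat.mod_eq_of_lt (lt_of_le_of_lt ha h3), Nat.mod_eq_of_lt hp] at this
  exact this

lemma factorization_mul_self {p r : ℕ} (hp : p.Prime) (hr : r.Prime) (hne : p ≠ r) :
    (p * r).factorization p = 1 := by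
  rw [Nat.factorization_mul hp.pos.ne' hr.pos.ne']
  simp [hp.factorization, hr.factorization, Finsupp.single_apply, hne, Ne.symm hne]



theorem two_primes : ∀ (n : ℕ) (G : Type u) [Group G] [Finite G], Nat.card G = n →
    IsCpoGroup G → (¬ ∀ a b : G, a * b = b * a) →
    ∃ p r : ℕ, p.Prime ∧ r.Prime ∧ r < p ∧ Nat.card G = p * r := by
  intro n
  induction n using Nat.strong_induction_on with
  | _ n IH =>
  intro G _ _ hn hG hna
  have hnt : Nontrivial G := by
    by_contra h
    rw [not_nontrivial_iff_subsingleton] at h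
    exact hna fun a b => Subsingleton.elim _ _
  have hcard1 : 1 < Nat.card G := Finite.one_lt_card
  set q₁ := (Nat.card G).minFac with hq₁def
  have hq₁ : q₁.Prime := Nat.minFac_prime (by omega)
  haveI : Fact q₁.Prime := ⟨hq₁⟩
  have hsf : Squarefree (Nat.card G) := squarefree_card hG
  obtain ⟨P⟩ : Nonempty (Sylow q₁ G) := inferInstance
  have hfact : (Nat.card G).factorization q₁ = 1 := by
    have h1 := hsf.natFactorization_le_one q₁
    have h2 : 0 < (Nat.card G).factorization q₁ :=
      hq₁.factorization_pos_of_dvd (by omega) (Nat.minFac_dvd _)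
    omega
  have hcardP : Nat.card P.1 = q₁ := by rw [P.card_eq_multiplicity, hfact, pow_one]
  haveI : Nontrivial P.1 := Finite.one_lt_card_iff_nontrivial.mp (by rw [hcardP]; exact hq₁.one_lt)
  obtain ⟨x, hxP, hx1⟩ := (Subgroup.nontrivial_iff_exists_ne_one P.1).mp inferInstance
  have hox : orderOf x = q₁ := by
    have hdvd : orderOf x ∣ q₁ := by
      rw [← hcardP, ← Nat.card_zpowers]
      exact Subgroup.card_dvd_of_le (Subgroup.zpowers_le.mpr hxP)
    exact (hq₁.eq_one_or_self_of_dvd _ hdvd).resolve_left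
      (by simpa [orderOf_eq_one_iff] using hx1)
  have hPx : (P : Subgroup G) = Subgroup.zpowers x :=
    (Subgroup.eq_of_le_of_card_ge (Subgroup.zpowers_le.mpr hxP)
      (by rw [Nat.card_zpowers, hox, hcardP])).symm
  -- Burnside hypothesis: the normalizer of P centralizes P
  have hP : Subgroup.normalizer (P.1 : Set G) ≤ Subgroup.centralizer (P.1 : Set G) := by
    intro g hg
    have h2le : 2 ≤ q₁ := hq₁.two_le
    have hgx : g * x = x * g := by
      by_cases hg1 : g = 1
      · simp [hg1]
      have hs := orderOf_prime hG hg1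
      have hq₁s : q₁ ≤ orderOf g := Nat.minFac_le_of_dvd hs.two_le (orderOf_dvd_natCard g)
      have hconj : g * x * g⁻¹ ∈ P.1 := (Subgroup.mem_normalizer_iff.mp hg x).mp hxP
      rw [hPx] at hconj
      obtain ⟨k, hk⟩ := Subgroup.mem_zpowers_iff.mp hconj
      have key2 : ∀ m : ℕ, g ^ m * x * (g ^ m)⁻¹ = x ^ (k ^ m) := by
        intro m
        induction m with
        | zero => simp
        | succ m ih =>
          have h1 : g ^ (m + 1) * x * (g ^ (m + 1))⁻¹ = g * (g ^ m * x * (g ^ m)⁻¹) * g⁻¹ := by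
            rw [pow_succ']; group
          have h2 : g * x ^ (k ^ m) * g⁻¹ = (g * x * g⁻¹) ^ (k ^ m) := by
            simpa [MulAut.conj_apply] using (map_zpow (MulAut.conj g) x (k ^ m)).symm
          rw [h1, ih, h2, ← hk, ← zpow_mul]
          congr 1
          ring
      set s := orderOf g with hsdef
      have h3 : x ^ ((k : ℤ) ^ s) = x := by
        have h4 := key2 s
        rw [pow_orderOf_eq_one g] at h4
        simpa using h4.symm
      have hdvd1 : ((q₁ : ℤ)) ∣ k ^ s - 1 := by
        rw [← hox]
        exact orderOf_dvd_iff_zpow_eq_one.mpr (by rw [zpow_sub, h3, zpow_one, mul_inv_cancel])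
      haveI : NeZero q₁ := ⟨hq₁.pos.ne'⟩
      have hu : ((k : ZMod q₁)) ^ s = 1 := by
        have h5 : ((k ^ s - 1 : ℤ) : ZMod q₁) = 0 := by
          rw [ZMod.intCast_zmod_eq_zero_iff_dvd]
          exact hdvd1
        push_cast at h5
        rwa [sub_eq_zero] at h5
      have hu0 : (k : ZMod q₁) ≠ 0 := by
        intro h0
        have h6 : ((q₁ : ℤ)) ∣ k := (ZMod.intCast_zmod_eq_zero_iff_dvd k q₁).mp h0
        have h7 : x ^ k = 1 := orderOf_dvd_iff_zpow_eq_one.mp (by rw [hox]; exact h6)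
        rw [hk] at h7
        apply hx1
        have : x = g⁻¹ * (g * x * g⁻¹) * g := by group
        rw [this, h7]
        group
      let v : (ZMod q₁)ˣ := Units.mk0 (k : ZMod q₁) hu0
      have hv : v ^ s = 1 := by
        apply Units.ext
        rw [Units.val_pow_eq_pow_val, Units.val_one]
        exact hu
      have hov : orderOf v ∣ s := orderOf_dvd_of_pow_eq_one hv
      have hov2 : orderOf v ∣ q₁ - 1 := by
        have h8 := orderOf_dvd_natCard v
        rwa [Nat.card_eq_fintype_card, ZMod.card_units_eq_totient, Nat.totient_prime hq₁] at h8
      have hv1 : v = 1 := by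
        rcases hs.eq_one_or_self_of_dvd _ hov with h5 | h5
        · exact orderOf_eq_one_iff.mp h5
        · exfalso
          rw [h5] at hov2
          have h9 := Nat.le_of_dvd (by omega) hov2
          omega
      have hk1 : ((q₁ : ℤ)) ∣ k - 1 := by
        have h10 : ((k - 1 : ℤ) : ZMod q₁) = 0 := by
          push_cast
          have h11 : (k : ZMod q₁) = 1 := by
            have := congrArg Units.val hv1
            simpa [v] using this
          rw [h11]
          ring
        exact (ZMod.intCast_zmod_eq_zero_iff_dvd _ _).mp h10
      have h12 : x ^ (k - 1 : ℤ) = 1 :=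
        orderOf_dvd_iff_zpow_eq_one.mp (by rw [hox]; exact hk1)
      have hxk : x ^ (k : ℤ) = x := by
        rw [zpow_sub, zpow_one] at h12
        exact mul_inv_eq_one.mp h12
      rw [hxk] at hk
      -- hk : x = g * x * g⁻¹
      have : x * g = g * x := by
        have := hk.symm
        calc x * g = (g * x * g⁻¹) * g := by rw [← hk]
        _ = g * x := by group
      exact this.symm
    rw [Subgroup.mem_centralizer_iff]
    intro y hy
    rw [hPx] at hy
    obtain ⟨m, rfl⟩ := Subgroup.mem_zpowers_iff.mp hy
    have hcomm : Commute g x := hgx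
    exact ((hcomm.zpow_right m).symm).eq
  -- Burnside's normal complement
  have hcompl := MonoidHom.ker_transferSylow_isComplement' P hP
  set K := (MonoidHom.transferSylow P hP).ker with hKdef
  have hmul : Nat.card K * q₁ = Nat.card G := by
    have := hcompl.card_mul
    rwa [hcardP] at this
  haveI hKnormal : K.Normal := MonoidHom.normal_ker _
  clear_value K
  by_cases habK : ∀ a b : K, a * b = b * a
  · -- K abelian
    have hKnt : Nat.card K ≠ 1 := by
      intro h1
      have hcardG : Nat.card G = q₁ := by rw [← hmul, h1, one_mul]
      haveI := isCyclic_of_prime_card (p := q₁) hcardG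
      obtain ⟨gen, hgen⟩ := IsCyclic.exists_generator (α := G)
      apply hna
      intro a b
      obtain ⟨i, rfl⟩ := hgen a
      obtain ⟨j, rfl⟩ := hgen b
      exact ((Commute.refl gen).zpow_zpow i j).eq
    haveI : Nontrivial K := by
      apply Finite.one_lt_card_iff_nontrivial.mp
      have := Nat.card_pos (α := K)
      omega
    obtain ⟨k₀, hk₀K, hk₀1⟩ := (Subgroup.nontrivial_iff_exists_ne_one K).mp inferInstance
    have hle : K ≤ Subgroup.centralizer {k₀} := by
      intro g hg
      rw [Subgroup.mem_centralizer_singleton_iff]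
      have h13 := habK ⟨g, hg⟩ ⟨k₀, hk₀K⟩
      have h13' := congrArg Subtype.val h13
      push_cast at h13'
      exact h13'
    have h14 : Nat.card K ∣ Nat.card (Subgroup.centralizer ({k₀} : Set G)) :=
      Subgroup.card_dvd_of_le hle
    rw [card_cc hG hk₀1] at h14
    have hs := orderOf_prime hG hk₀1
    have hKcard : Nat.card K = orderOf k₀ := (hs.eq_one_or_self_of_dvd _ h14).resolve_left hKnt
    set s := orderOf k₀ with hsdef
    have hsdvd : s ∣ Nat.card G := by rw [← hmul, hKcard]; exact dvd_mul_right s q₁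
    have hq₁s : q₁ ≤ s := Nat.minFac_le_of_dvd hs.two_le hsdvd
    have hne : s ≠ q₁ := by
      intro h
      refine Nat.squarefree_iff_prime_squarefree.mp hsf q₁ hq₁ ?_
      rw [← hmul, hKcard, h]
    exact ⟨s, q₁, hs, hq₁, by omega, by rw [← hmul, hKcard]⟩
  · -- K nonabelian: recurse
    have hKcpo := isCpo_subgroup hG K
    have hlt : Nat.card K < n := by
      rw [← hn, ← hmul]
      have h15 := Nat.card_pos (α := K)
      nlinarith [hq₁.one_lt]
    obtain ⟨p', r', hp', hr', hlt', hKcard⟩ := IH (Nat.card K) hlt K rfl hKcpo habK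
    haveI : Fact p'.Prime := ⟨hp'⟩
    haveI : Fact r'.Prime := ⟨hr'⟩
    have hp'r' : p' ≠ r' := by omega
    have hq₁p' : q₁ ≠ p' := by
      intro h
      refine Nat.squarefree_iff_prime_squarefree.mp hsf q₁ hq₁ ?_
      rw [← hmul, hKcard, h]
      exact ⟨r', by ring⟩
    have hq₁r' : q₁ ≠ r' := by
      intro h
      refine Nat.squarefree_iff_prime_squarefree.mp hsf q₁ hq₁ ?_
      rw [← hmul, hKcard, h]
      exact ⟨p', by ring⟩
    have hfactK : (Nat.card K).factorization p' = 1 := by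
      rw [hKcard]; exact factorization_mul_self hp' hr' hp'r'
    obtain ⟨P'⟩ : Nonempty (Sylow p' K) := inferInstance
    have hcardP' : Nat.card P'.1 = p' := by rw [P'.card_eq_multiplicity, hfactK, pow_one]
    have hidx : P'.1.index = r' := by
      have h6 := Subgroup.card_mul_index P'.1
      rw [hcardP', hKcard] at h6
      exact Nat.eq_of_mul_eq_mul_left hp'.pos h6
    have hnum : Nat.card (Sylow p' K) = 1 :=
      sylow_count_eq_one hp'.one_lt (card_sylow_modEq_one p' K)
        (hidx ▸ P'.card_dvd_index) hlt' hr'.pos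
    haveI hss : Subsingleton (Sylow p' K) := (Nat.card_eq_one_iff_unique.mp hnum).1
    set N : Subgroup G := P'.1.map K.subtype with hNdef
    have hNle : N ≤ K := by
      rintro _ ⟨y, hy, rfl⟩
      exact y.2
    have hcardN : Nat.card N = p' := by
      rw [← hcardP']
      exact (Nat.card_congr
        (Subgroup.equivMapOfInjective P'.1 K.subtype K.subtype_injective).toEquiv).symm
    have huniq : ∀ H : Subgroup G, H ≤ K → Nat.card H = p' → H = N := by
      intro H hHK hHc
      have hc2 : Nat.card (H.subgroupOf K) = p' := by
        rw [← hHc]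
        exact Nat.card_congr (Subgroup.subgroupOfEquivOfLe hHK).toEquiv
      have heq : Sylow.ofCard (H.subgroupOf K) (by rw [hc2, hfactK, pow_one]) = P' :=
        Subsingleton.elim _ _
      have heq2 : H.subgroupOf K = P'.1 := by rw [← heq]; rfl
      calc H = (H.subgroupOf K).map K.subtype := by
              rw [Subgroup.subgroupOf_map_subtype, inf_eq_left.mpr hHK]
        _ = N := by rw [heq2]
    have hNnormal : N.Normal := by
      constructor
      intro m hm g
      have hCle : (Subgroup.map (MulAut.conj g).toMonoidHom N) ≤ K := by
        rintro _ ⟨y, hy, rfl⟩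
        have hyK : y ∈ K := hNle hy
        simpa [MulAut.conj_apply] using hKnormal.conj_mem y hyK g
      have hCcard : Nat.card (Subgroup.map (MulAut.conj g).toMonoidHom N) = p' := by
        rw [← hcardN]
        exact (Nat.card_congr
          (Subgroup.equivMapOfInjective N _ (MulAut.conj g).injective).toEquiv).symm
      have hCN := huniq _ hCle hCcard
      have h16 : (MulAut.conj g).toMonoidHom m ∈ Subgroup.map (MulAut.conj g).toMonoidHom N :=
        Subgroup.mem_map_of_mem _ hm
      rw [hCN] at h16
      simpa [MulAut.conj_apply] using h16
    haveI : Nontrivial N := Finite.one_lt_card_iff_nontrivial.mp (by rw [hcardN]; exact hp'.one_lt)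
    obtain ⟨n₀, hn₀N, hn₀1⟩ := (Subgroup.nontrivial_iff_exists_ne_one N).mp inferInstance
    have hon₀ : orderOf n₀ = p' := by
      have hdvd7 : orderOf n₀ ∣ p' := by
        rw [← hcardN, ← Nat.card_zpowers]
        exact Subgroup.card_dvd_of_le (Subgroup.zpowers_le.mpr hn₀N)
      exact (hp'.eq_one_or_self_of_dvd _ hdvd7).resolve_left
        (by simpa [orderOf_eq_one_iff] using hn₀1)
    have hzN : Subgroup.zpowers n₀ = N :=
      Subgroup.eq_of_le_of_card_ge (Subgroup.zpowers_le.mpr hn₀N)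
        (by rw [Nat.card_zpowers, hon₀, hcardN])
    have hccN : Subgroup.centralizer ({n₀} : Set G) = N := by rw [cc_eq hG hn₀1, hzN]
    have hNab : ∀ a ∈ N, ∀ b ∈ N, a * b = b * a := by
      intro a ha b hb
      rw [← hzN] at ha hb
      obtain ⟨i, rfl⟩ := Subgroup.mem_zpowers_iff.mp ha
      obtain ⟨j, rfl⟩ := Subgroup.mem_zpowers_iff.mp hb
      exact ((Commute.refl n₀).zpow_zpow i j).eq
    haveI := hNnormal
    set f : G →* MulAut N := MulAut.conjNormal with hfdef
    have hker : f.ker = N := by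
      ext g
      constructor
      · intro hg
        have h8 : f g ⟨n₀, hn₀N⟩ = ⟨n₀, hn₀N⟩ := by rw [MonoidHom.mem_ker.mp hg]; rfl
        have h9 : g * n₀ * g⁻¹ = n₀ := by
          have h8' := congrArg Subtype.val h8
          rwa [MulAut.conjNormal_apply] at h8'
        rw [← hccN]
        apply Subgroup.mem_centralizer_singleton_iff.mpr
        calc g * n₀ = (g * n₀ * g⁻¹) * g := by group
          _ = n₀ * g := by rw [h9]
      · intro hg
        rw [MonoidHom.mem_ker]
        apply MulEquiv.ext
        intro m
        apply Subtype.ext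
        have h17 := hNab g hg (m : G) m.2
        show ((MulAut.conjNormal g) m : G) = (m : G)
        rw [MulAut.conjNormal_apply]
        calc g * (m : G) * g⁻¹ = ((m : G) * g) * g⁻¹ := by rw [h17]
          _ = (m : G) := by group
    haveI : IsCyclic N := isCyclic_of_prime_card (p := p') hcardN
    have hcardQ : Nat.card (G ⧸ N) = q₁ * r' := by
      have h10 := Subgroup.card_eq_card_quotient_mul_card_subgroup N
      rw [hcardN, ← hmul, hKcard] at h10
      apply Nat.eq_of_mul_eq_mul_left hp'.pos
      calc p' * Nat.card (G ⧸ N) = Nat.card (G ⧸ N) * p' := mul_comm _ _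
        _ = p' * r' * q₁ := h10.symm
        _ = p' * (q₁ * r') := by ring
    have hQcomm : ∀ a b : G ⧸ N, a * b = b * a := by
      intro a b
      obtain ⟨y, rfl⟩ := QuotientGroup.mk'_surjective N a
      obtain ⟨z, rfl⟩ := QuotientGroup.mk'_surjective N b
      rw [← map_mul, ← map_mul]
      have h18 : (y * z)⁻¹ * (z * y) ∈ N := by
        rw [← hker, MonoidHom.mem_ker, map_mul, map_inv, map_mul, map_mul,
          mulAut_commute (f y) (f z)]
        group
      rw [QuotientGroup.mk'_eq_mk']
      exact ⟨(y * z)⁻¹ * (z * y), h18, by group⟩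
    obtain ⟨a, ha⟩ := exists_prime_orderOf_dvd_card' (G := G ⧸ N) q₁
      (by rw [hcardQ]; exact dvd_mul_right _ _)
    obtain ⟨b, hb⟩ := exists_prime_orderOf_dvd_card' (G := G ⧸ N) r'
      (by rw [hcardQ]; exact dvd_mul_left _ _)
    have hco : Nat.Coprime q₁ r' := (Nat.coprime_primes hq₁ hr').mpr hq₁r'
    have habo : orderOf (a * b) = q₁ * r' := by
      have hcab : Commute a b := hQcomm a b
      rw [hcab.orderOf_mul_eq_mul_orderOf_of_coprime (by rw [ha, hb]; exact hco), ha, hb]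
    obtain ⟨g, hg⟩ := QuotientGroup.mk'_surjective N (a * b)
    have hdvd9 : q₁ * r' ∣ orderOf g := by
      rw [← habo, ← hg]
      exact orderOf_map_dvd _ g
    have hg1 : g ≠ 1 := by
      intro hgeq
      rw [hgeq, orderOf_one, Nat.dvd_one] at hdvd9
      exact hq₁.ne_one (Nat.eq_one_of_mul_eq_one_right hdvd9)
    have hgs := orderOf_prime hG hg1
    have e1 : q₁ = orderOf g :=
      (Nat.prime_dvd_prime_iff_eq hq₁ hgs).mp ((dvd_mul_right q₁ r').trans hdvd9)
    have e2 : r' = orderOf g :=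
      (Nat.prime_dvd_prime_iff_eq hr' hgs).mp ((dvd_mul_left r' q₁).trans hdvd9)
    exact absurd (e1.trans e2.symm) hq₁r'



lemma ncard_card_eq (s : ℕ) [Fact s.Prime] (hfs : (Nat.card G).factorization s = 1) :
    {H : Subgroup G | Nat.card H = s}.ncard = Nat.card (Sylow s G) := by
  rw [← Nat.card_coe_set_eq]
  apply Nat.card_congr
  exact
    { toFun := fun H => Sylow.ofCard H.1 (by rw [H.2, hfs, pow_one])
      invFun := fun P => ⟨P.1, by show Nat.card P.1 = s; rw [P.card_eq_multiplicity, hfs, pow_one]⟩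
      left_inv := fun H => Subtype.ext rfl
      right_inv := fun P => Sylow.ext rfl }

lemma sylow_normal_of_card_eq_one {s : ℕ} [Fact s.Prime] (P : Sylow s G)
    (h : Nat.card (Sylow s G) = 1) : P.1.Normal := by
  haveI : Subsingleton (Sylow s G) := (Nat.card_eq_one_iff_unique.mp h).1
  apply Subgroup.normalizer_eq_top_iff.mp
  rw [eq_top_iff']
  intro g
  exact Sylow.smul_eq_iff_mem_normalizer.mp (Subsingleton.elim _ _)

end CpoAux
end CpoProofAux
open CpoAux Subgroup in
theorem stmt_13 (G : Type*) [Group G] [Finite G] (hG : IsCpoGroup G)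
    (hna : ¬ ∀ a b : G, a * b = b * a)
    (p : ℕ) (hp : p.Prime) (hdvd : p ∣ Nat.card G)
    (hmax : ∀ q : ℕ, q.Prime → q ∣ Nat.card G → q ≤ p) :
    numCent G = p + 2 := by
  obtain ⟨p0, r, hp0, hr, hrp0, hcard⟩ :=
    two_primes (Nat.card G) G rfl hG hna
  have hpp0 : p = p0 := by
    rw [hcard] at hdvd
    rcases (Nat.Prime.dvd_mul hp).mp hdvd with h | h
    · exact (Nat.prime_dvd_prime_iff_eq hp hp0).mp h
    · exfalso
      have h1 : p = r := (Nat.prime_dvd_prime_iff_eq hp hr).mp h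
      have h2 : p0 ≤ p := hmax p0 hp0 (by rw [hcard]; exact dvd_mul_right _ _)
      omega
  subst hpp0
  haveI : Fact p.Prime := ⟨hp⟩
  haveI : Fact r.Prime := ⟨hr⟩
  have hpr : p ≠ r := by omega
  have hfp : (Nat.card G).factorization p = 1 := by
    rw [hcard]; exact factorization_mul_self hp hr hpr
  have hfr : (Nat.card G).factorization r = 1 := by
    rw [hcard, mul_comm]; exact factorization_mul_self hr hp (Ne.symm hpr)
  -- Sylow p is unique
  obtain ⟨Pp⟩ : Nonempty (Sylow p G) := inferInstance
  obtain ⟨Rr⟩ : Nonempty (Sylow r G) := inferInstance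
  have hcardPp : Nat.card Pp.1 = p := by rw [Pp.card_eq_multiplicity, hfp, pow_one]
  have hcardRr : Nat.card Rr.1 = r := by rw [Rr.card_eq_multiplicity, hfr, pow_one]
  have hidxPp : Pp.1.index = r := by
    have h6 := Subgroup.card_mul_index Pp.1
    rw [hcardPp, hcard] at h6
    exact Nat.eq_of_mul_eq_mul_left hp.pos h6
  have hidxRr : Rr.1.index = p := by
    have h6 := Subgroup.card_mul_index Rr.1
    rw [hcardRr, hcard] at h6
    exact Nat.eq_of_mul_eq_mul_left hr.pos (h6.trans (mul_comm p r))
  have hnp : Nat.card (Sylow p G) = 1 :=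
    sylow_count_eq_one hp.one_lt (card_sylow_modEq_one p G)
      (hidxPp ▸ Pp.card_dvd_index) hrp0 hr.pos
  -- number of Sylow r subgroups is p
  have hnr : Nat.card (Sylow r G) = p := by
    have h2 : Nat.card (Sylow r G) ∣ p := hidxRr ▸ Rr.card_dvd_index
    have h3 : Nat.card (Sylow r G) ≠ 1 := by
      intro h1'
      have hPn : Pp.1.Normal := sylow_normal_of_card_eq_one Pp hnp
      have hRn : Rr.1.Normal := sylow_normal_of_card_eq_one Rr h1'
      have hdisj : Disjoint Pp.1 Rr.1 := by
        rw [Subgroup.disjoint_def]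
        intro z hzP hzR
        have d1 : orderOf z ∣ p := by
          rw [← hcardPp, ← Nat.card_zpowers]
          exact card_dvd_of_le (Subgroup.zpowers_le.mpr hzP)
        have d2 : orderOf z ∣ r := by
          rw [← hcardRr, ← Nat.card_zpowers]
          exact card_dvd_of_le (Subgroup.zpowers_le.mpr hzR)
        have : orderOf z = 1 := Nat.eq_one_of_dvd_coprimes
          ((Nat.coprime_primes hp hr).mpr hpr) d1 d2
        exact orderOf_eq_one_iff.mp this
      haveI : Nontrivial Pp.1 :=
        Finite.one_lt_card_iff_nontrivial.mp (by rw [hcardPp]; exact hp.one_lt)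
      haveI : Nontrivial Rr.1 :=
        Finite.one_lt_card_iff_nontrivial.mp (by rw [hcardRr]; exact hr.one_lt)
      obtain ⟨x, hxP, hx1⟩ := (Subgroup.nontrivial_iff_exists_ne_one Pp.1).mp inferInstance
      obtain ⟨y, hyR, hy1⟩ := (Subgroup.nontrivial_iff_exists_ne_one Rr.1).mp inferInstance
      have hcomm : Commute x y :=
        Subgroup.commute_of_normal_of_disjoint _ _ hPn hRn hdisj x y hxP hyR
      have hxy : x ∈ Subgroup.centralizer ({y} : Set G) :=
        Subgroup.mem_centralizer_singleton_iff.mpr hcomm.eq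
      rw [cc_eq hG hy1] at hxy
      have hdp : orderOf x ∣ p := by
        rw [← hcardPp, ← Nat.card_zpowers]
        exact card_dvd_of_le (Subgroup.zpowers_le.mpr hxP)
      have hox : orderOf x = p := (hp.eq_one_or_self_of_dvd _ hdp).resolve_left
        (by simpa [orderOf_eq_one_iff] using hx1)
      have hdy : orderOf y ∣ r := by
        rw [← hcardRr, ← Nat.card_zpowers]
        exact card_dvd_of_le (Subgroup.zpowers_le.mpr hyR)
      have hoy : orderOf y = r := (hr.eq_one_or_self_of_dvd _ hdy).resolve_left
        (by simpa [orderOf_eq_one_iff] using hy1)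
      have : p ∣ r := by
        rw [← hox, ← hoy, ← Nat.card_zpowers, ← Nat.card_zpowers]
        exact card_dvd_of_le (Subgroup.zpowers_le.mpr hxy)
      exact hpr ((Nat.prime_dvd_prime_iff_eq hp hr).mp this)
    exact (hp.eq_one_or_self_of_dvd _ h2).resolve_left h3
  -- the set of centralizers
  have htop : Subgroup.centralizer ({(1 : G)} : Set G) = ⊤ := by
    ext g; simp [Subgroup.mem_centralizer_singleton_iff]
  have hcent : ∀ (H : Subgroup G) (s : ℕ), s.Prime → Nat.card H = s →
      ∃ x : G, H = Subgroup.centralizer ({x} : Set G) := by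
    intro H s hs hHs
    haveI : Nontrivial H :=
      Finite.one_lt_card_iff_nontrivial.mp (by rw [hHs]; exact hs.one_lt)
    obtain ⟨h, hhH, hh1⟩ := (Subgroup.nontrivial_iff_exists_ne_one H).mp inferInstance
    have hdvd' : orderOf h ∣ s := by
      rw [← hHs, ← Nat.card_zpowers]
      exact card_dvd_of_le (Subgroup.zpowers_le.mpr hhH)
    have ho : orderOf h = s := (hs.eq_one_or_self_of_dvd _ hdvd').resolve_left
      (by simpa [orderOf_eq_one_iff] using hh1)
    have hz : Subgroup.zpowers h = H :=
      Subgroup.eq_of_le_of_card_ge (Subgroup.zpowers_le.mpr hhH)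
        (by rw [Nat.card_zpowers, ho, hHs])
    exact ⟨h, by rw [cc_eq hG hh1, hz]⟩
  have hset : {H : Subgroup G | ∃ x : G, H = Subgroup.centralizer ({x} : Set G)} =
      insert (⊤ : Subgroup G)
        ({H : Subgroup G | Nat.card H = p} ∪ {H : Subgroup G | Nat.card H = r}) := by
    ext H
    simp only [Set.mem_setOf_eq, Set.mem_insert_iff, Set.mem_union]
    constructor
    · rintro ⟨x, rfl⟩
      by_cases hx : x = 1
      · left; rw [hx, htop]
      · right
        have hcprime := hG x hx
        have hdvd'' := Subgroup.card_subgroup_dvd_card (Subgroup.centralizer ({x} : Set G))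
        rw [hcard] at hdvd''
        rcases (Nat.Prime.dvd_mul hcprime).mp hdvd'' with h | h
        · left; exact (Nat.prime_dvd_prime_iff_eq hcprime hp).mp h
        · right; exact (Nat.prime_dvd_prime_iff_eq hcprime hr).mp h
    · rintro (rfl | h | h)
      · exact ⟨1, htop.symm⟩
      · exact hcent H p hp h
      · exact hcent H r hr h
  haveI : Finite (Subgroup G) :=
    Finite.of_injective (fun H : Subgroup G => (H : Set G)) SetLike.coe_injective
  have hnotmem : (⊤ : Subgroup G) ∉
      ({H : Subgroup G | Nat.card H = p} ∪ {H : Subgroup G | Nat.card H = r}) := by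
    intro hmem
    have hct : Nat.card (⊤ : Subgroup G) = p * r := by rw [Subgroup.card_top, hcard]
    have h2p := hp.two_le
    have h2r := hr.two_le
    rcases hmem with h | h <;> simp only [Set.mem_setOf_eq] at h <;> rw [hct] at h <;>
      nlinarith [h]
  have hdisj2 : Disjoint {H : Subgroup G | Nat.card H = p} {H : Subgroup G | Nat.card H = r} := by
    rw [Set.disjoint_left]
    intro H h1 h2
    exact hpr ((h1 : Nat.card H = p).symm.trans h2)
  rw [numCent, hset, Set.ncard_insert_of_notMem hnotmem (Set.toFinite _),
    Set.ncard_union_eq hdisj2 (Set.toFinite _) (Set.toFinite _),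
    ncard_card_eq p hfp, ncard_card_eq r hfr, hnp, hnr]
  omega
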